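/- (Proposition 1, local contraction form.) For every c with 2/π < c < 1 there exists ε > 0 such that for all Δ with 0 < |Δ| < ε, the progressively-balanced-sampling update satisfies |θ̂(Δ) − θ*| ≤ c·|Δ|. -/

import Mathlib

/-- The standard normal density `φ`. -/
noncomputable def stdGauss (t : ℝ) : ℝ :=
  (Real.sqrt (2 * Real.pi))⁻¹ * Real.exp (-t ^ 2 / 2)

/-- The standard normal CDF `Φ`. -/
noncomputable def stdCDF (t : ℝ) : ℝ := ∫ s in Set.Iic t, stdGauss s

/-- The (pseudo-)prior of the head class: `p1(Δ) = e^{2xΔ}/(1+e^{2xΔ})`, `x = (μ2−μ1)/2`. -/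
noncomputable def pHead (x Δ : ℝ) : ℝ := Real.exp (2 * x * Δ) / (1 + Real.exp (2 * x * Δ))

/-- The (pseudo-)prior of the tail class: `p2(Δ) = 1/(1+e^{2xΔ})`, `x = (μ2−μ1)/2`. -/
noncomputable def pTail (x Δ : ℝ) : ℝ := 1 / (1 + Real.exp (2 * x * Δ))

/-- The mixture density `f_Δ(t) = p1(Δ)·φ(t−μ1) + p2(Δ)·φ(t−μ2)`. -/
noncomputable def mixDensity (μ1 μ2 Δ t : ℝ) : ℝ :=
  pHead ((μ2 - μ1) / 2) Δ * stdGauss (t - μ1) + pTail ((μ2 - μ1) / 2) Δ * stdGauss (t - μ2)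

/-- The conditional mean `m1(Δ)` of `f_Δ` to the left of the boundary `θ* + Δ`. -/
noncomputable def mLeft (μ1 μ2 Δ : ℝ) : ℝ :=
  (∫ t in Set.Iic ((μ1 + μ2) / 2 + Δ), t * mixDensity μ1 μ2 Δ t) /
    ∫ t in Set.Iic ((μ1 + μ2) / 2 + Δ), mixDensity μ1 μ2 Δ t

/-- The conditional mean `m2(Δ)` of `f_Δ` to the right of the boundary `θ* + Δ`. -/
noncomputable def mRight (μ1 μ2 Δ : ℝ) : ℝ :=
  (∫ t in Set.Ioi ((μ1 + μ2) / 2 + Δ), t * mixDensity μ1 μ2 Δ t) /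
    ∫ t in Set.Ioi ((μ1 + μ2) / 2 + Δ), mixDensity μ1 μ2 Δ t

/-- The progressively-balanced-sampling update `θ̂(Δ) = (m1(Δ) + m2(Δ))/2`. -/
noncomputable def pbsUpdate (μ1 μ2 Δ : ℝ) : ℝ := (mLeft μ1 μ2 Δ + mRight μ1 μ2 Δ) / 2

open MeasureTheory Real Set Filter

lemma sqrt2pi_pos : 0 < Real.sqrt (2 * Real.pi) :=
  Real.sqrt_pos.mpr (by positivity)

lemma stdGauss_pos (t : ℝ) : 0 < stdGauss t := by
  unfold stdGauss; positivity

lemma stdGauss_continuous : Continuous stdGauss := by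
  unfold stdGauss; fun_prop

lemma stdGauss_neg (t : ℝ) : stdGauss (-t) = stdGauss t := by
  simp [stdGauss, neg_pow]

lemma exp_eq_stdGauss (t : ℝ) :
    (Real.sqrt (2 * Real.pi))⁻¹ * Real.exp (-(1/2 : ℝ) * t ^ 2) = stdGauss t := by
  rw [show (-(1/2 : ℝ) * t ^ 2) = -t ^ 2 / 2 by ring]; rfl

lemma stdGauss_integrable : Integrable stdGauss := by
  have h : Integrable (fun t : ℝ => Real.exp (-(1/2 : ℝ) * t ^ 2)) :=
    integrable_exp_neg_mul_sq (by norm_num)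
  exact (h.const_mul ((Real.sqrt (2 * Real.pi))⁻¹)).congr
    (Eventually.of_forall fun t => exp_eq_stdGauss t)

lemma stdGauss_mul_integrable : Integrable (fun t : ℝ => t * stdGauss t) := by
  have h : Integrable (fun t : ℝ => t * Real.exp (-(1/2 : ℝ) * t ^ 2)) :=
    integrable_mul_exp_neg_mul_sq (by norm_num)
  refine (h.const_mul ((Real.sqrt (2 * Real.pi))⁻¹)).congr
    (Eventually.of_forall fun t => ?_)
  show _ = t * stdGauss t
  rw [← exp_eq_stdGauss t]; ring

lemma stdGauss_integral : ∫ t : ℝ, stdGauss t = 1 := by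
  have h : ∫ t : ℝ, Real.exp (-(1/2 : ℝ) * t ^ 2) = Real.sqrt (Real.pi / (1/2)) :=
    integral_gaussian (1/2)
  have h2 : ∫ t : ℝ, stdGauss t
      = (Real.sqrt (2 * Real.pi))⁻¹ * ∫ t : ℝ, Real.exp (-(1/2:ℝ) * t ^ 2) := by
    rw [← integral_const_mul]
    exact integral_congr_ae (Eventually.of_forall fun t => (exp_eq_stdGauss t).symm)
  rw [h2, h, show Real.pi / (1/2) = 2 * Real.pi by ring]
  exact inv_mul_cancel₀ (ne_of_gt sqrt2pi_pos)

lemma hasDerivAt_stdGauss (t : ℝ) : HasDerivAt stdGauss (-t * stdGauss t) t := by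
  have h0 : HasDerivAt (fun s : ℝ => s ^ 2) (2 * t) t := by
    simpa using hasDerivAt_pow 2 t
  have h1 : HasDerivAt (fun s : ℝ => -s ^ 2 / 2) (-t) t := by
    refine (h0.neg.div_const 2).congr_deriv (Eq.symm ?_); ring
  have h2 := (h1.exp).const_mul ((Real.sqrt (2 * Real.pi))⁻¹)
  have : HasDerivAt stdGauss ((Real.sqrt (2 * Real.pi))⁻¹ * (Real.exp (-t^2/2) * -t)) t := h2
  convert this using 1
  unfold stdGauss; ring

lemma tendsto_stdGauss_atTop : Tendsto stdGauss atTop (nhds 0) := by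
  have h0 : Tendsto (fun x : ℝ => x ^ 2) atTop atTop := tendsto_pow_atTop (by norm_num)
  have h : Tendsto (fun t : ℝ => -t ^ 2 / 2) atTop atBot :=
    (tendsto_neg_atTop_atBot.comp h0).atBot_div_const (by norm_num)
  have h2 := (Real.tendsto_exp_atBot.comp h).const_mul ((Real.sqrt (2 * Real.pi))⁻¹)
  have h3 : (fun t : ℝ => (Real.sqrt (2 * Real.pi))⁻¹ * Real.exp (-t ^ 2 / 2)) = stdGauss := rfl
  rw [mul_zero] at h2
  exact h3 ▸ h2

lemma tendsto_stdGauss_atBot : Tendsto stdGauss atBot (nhds 0) := by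
  have := tendsto_stdGauss_atTop.comp tendsto_neg_atBot_atTop
  have h3 : (fun t : ℝ => stdGauss (-t)) = stdGauss := funext stdGauss_neg
  exact h3 ▸ this

lemma integral_Iic_mul_stdGauss (a : ℝ) :
    ∫ t in Set.Iic a, t * stdGauss t = -stdGauss a := by
  have := integral_Iic_of_hasDerivAt_of_tendsto' (a := a) (m := 0)
    (f := fun t => -stdGauss t) (f' := fun t => t * stdGauss t)
    (fun t _ => by
      have := (hasDerivAt_stdGauss t).neg
      refine (this).congr_deriv (Eq.symm ?_); ring)
    (stdGauss_mul_integrable.integrableOn)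
    (by simpa using tendsto_stdGauss_atBot.neg)
  simpa using this

lemma integral_Iic_stdGauss_lt_one (a : ℝ) : stdCDF a < 1 ∧ 0 < stdCDF a ∧
    (∫ t in Set.Ioi a, stdGauss t) = 1 - stdCDF a := by
  have hsplit : stdCDF a + ∫ t in Set.Ioi a, stdGauss t = 1 := by
    rw [stdCDF, intervalIntegral.integral_Iic_add_Ioi stdGauss_integrable.integrableOn
      stdGauss_integrable.integrableOn, stdGauss_integral]
  have hIic : 0 < stdCDF a := by
    rw [stdCDF]
    apply setIntegral_pos_iff_support_of_nonneg_ae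
      (Eventually.of_forall fun t => (stdGauss_pos t).le) stdGauss_integrable.integrableOn |>.2
    have : (Function.support stdGauss) = Set.univ := by
      ext t; simp [Function.support, (stdGauss_pos t).ne']
    rw [this]
    simpa using (by simp : (volume (Set.Iic a)) = ⊤) ▸ (by norm_num : (0:ENNReal) < ⊤)
  have hIoi : 0 < ∫ t in Set.Ioi a, stdGauss t := by
    apply setIntegral_pos_iff_support_of_nonneg_ae
      (Eventually.of_forall fun t => (stdGauss_pos t).le) stdGauss_integrable.integrableOn |>.2
    have : (Function.support stdGauss) = Set.univ := by
      ext t; simp [Function.support, (stdGauss_pos t).ne']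
    rw [this]
    simp [Measure.restrict_apply, MeasurableSet.univ]
  refine ⟨by linarith, hIic, by linarith⟩

lemma stdCDF_pos (a : ℝ) : 0 < stdCDF a := (integral_Iic_stdGauss_lt_one a).2.1
lemma stdCDF_lt_one (a : ℝ) : stdCDF a < 1 := (integral_Iic_stdGauss_lt_one a).1
lemma integral_Ioi_stdGauss (a : ℝ) : (∫ t in Set.Ioi a, stdGauss t) = 1 - stdCDF a :=
  (integral_Iic_stdGauss_lt_one a).2.2

lemma stdCDF_neg (a : ℝ) : stdCDF (-a) = 1 - stdCDF a := by
  rw [stdCDF, ← integral_Ioi_stdGauss a]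
  rw [← integral_comp_neg_Ioi]
  congr 1; ext t; rw [stdGauss_neg]

lemma stdCDF_zero : stdCDF 0 = 1/2 := by
  have := stdCDF_neg 0
  rw [neg_zero] at this; linarith

lemma integral_Ioi_mul_stdGauss (a : ℝ) :
    ∫ t in Set.Ioi a, t * stdGauss t = stdGauss a := by
  have := integral_Ioi_of_hasDerivAt_of_tendsto' (a := a) (m := 0)
    (f := fun t => -stdGauss t) (f' := fun t => t * stdGauss t)
    (fun t _ => by
      have := (hasDerivAt_stdGauss t).neg
      refine (this).congr_deriv (Eq.symm ?_); ring)
    (stdGauss_mul_integrable.integrableOn)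
    (by simpa using tendsto_stdGauss_atTop.neg)
  simpa using this

lemma hasDerivAt_stdCDF (a : ℝ) : HasDerivAt stdCDF (stdGauss a) a := by
  have h : ∀ t : ℝ, stdCDF t = stdCDF 0 + ∫ s in (0:ℝ)..t, stdGauss s := by
    intro t
    have := intervalIntegral.integral_Iic_sub_Iic (a := (0:ℝ)) (b := t) (μ := volume)
      stdGauss_integrable.integrableOn stdGauss_integrable.integrableOn
    rw [stdCDF, stdCDF]; linarith
  have hd : HasDerivAt (fun u => ∫ s in (0:ℝ)..u, stdGauss s) (stdGauss a) a :=
    intervalIntegral.integral_hasDerivAt_right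
      (stdGauss_integrable.intervalIntegrable)
      (stdGauss_continuous.stronglyMeasurable.stronglyMeasurableAtFilter)
      (stdGauss_continuous.continuousAt)
  have := (hd.const_add (stdCDF 0))
  exact this.congr_of_eventuallyEq (Eventually.of_forall fun t => (h t))

lemma setIntegral_Iic_comp_sub (f : ℝ → ℝ) (a μ : ℝ) :
    ∫ t in Set.Iic a, f (t - μ) = ∫ t in Set.Iic (a - μ), f t := by
  rw [← integral_indicator measurableSet_Iic, ← integral_indicator measurableSet_Iic]
  rw [show (Set.Iic a).indicator (fun t => f (t - μ))
      = fun t => ((Set.Iic (a - μ)).indicator f) (t - μ) by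
    ext t
    by_cases h : t ≤ a
    · simp [Set.indicator_apply, Set.mem_Iic, h, sub_le_sub_iff_right]
    · simp [Set.indicator_apply, Set.mem_Iic, h, sub_le_sub_iff_right]]
  exact integral_sub_right_eq_self ((Set.Iic (a - μ)).indicator f) μ

lemma setIntegral_Ioi_comp_sub (f : ℝ → ℝ) (a μ : ℝ) :
    ∫ t in Set.Ioi a, f (t - μ) = ∫ t in Set.Ioi (a - μ), f t := by
  rw [← integral_indicator measurableSet_Ioi, ← integral_indicator measurableSet_Ioi]
  rw [show (Set.Ioi a).indicator (fun t => f (t - μ))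
      = fun t => ((Set.Ioi (a - μ)).indicator f) (t - μ) by
    ext t
    by_cases h : a < t
    · simp [Set.indicator_apply, Set.mem_Ioi, h, sub_lt_sub_iff_right]
    · simp [Set.indicator_apply, Set.mem_Ioi, h, sub_lt_sub_iff_right]]
  exact integral_sub_right_eq_self ((Set.Ioi (a - μ)).indicator f) μ

lemma integral_Iic_stdGauss_shift (a μ : ℝ) :
    ∫ t in Set.Iic a, stdGauss (t - μ) = stdCDF (a - μ) :=
  setIntegral_Iic_comp_sub stdGauss a μ

lemma integral_Ioi_stdGauss_shift (a μ : ℝ) :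
    ∫ t in Set.Ioi a, stdGauss (t - μ) = 1 - stdCDF (a - μ) := by
  rw [setIntegral_Ioi_comp_sub stdGauss a μ, integral_Ioi_stdGauss]

lemma integrableOn_stdGauss_shift (μ : ℝ) (s : Set ℝ) :
    IntegrableOn (fun t => stdGauss (t - μ)) s := by
  have : Integrable (fun t : ℝ => stdGauss (t - μ)) :=
    stdGauss_integrable.comp_sub_right μ
  exact this.integrableOn

lemma integrableOn_mul_stdGauss_shift (μ : ℝ) (s : Set ℝ) :
    IntegrableOn (fun t => t * stdGauss (t - μ)) s := by
  have h1 : Integrable (fun t : ℝ => (t - μ) * stdGauss (t - μ)) :=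
    stdGauss_mul_integrable.comp_sub_right μ
  have h2 : Integrable (fun t : ℝ => μ * stdGauss (t - μ)) :=
    (stdGauss_integrable.comp_sub_right μ).const_mul μ
  have := h1.add h2
  refine (this.congr (Eventually.of_forall fun t => by simp; ring)).integrableOn

lemma integral_Iic_mul_stdGauss_shift (a μ : ℝ) :
    ∫ t in Set.Iic a, t * stdGauss (t - μ) = μ * stdCDF (a - μ) - stdGauss (a - μ) := by
  have h : ∫ t in Set.Iic a, t * stdGauss (t - μ)
      = (∫ t in Set.Iic a, (t - μ) * stdGauss (t - μ)) + ∫ t in Set.Iic a, μ * stdGauss (t - μ) := by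
    rw [← integral_add ((stdGauss_mul_integrable.comp_sub_right μ).integrableOn)
      (((stdGauss_integrable.comp_sub_right μ).const_mul μ).integrableOn)]
    exact setIntegral_congr_fun measurableSet_Iic fun t _ => by ring
  rw [h, setIntegral_Iic_comp_sub (fun s => s * stdGauss s) a μ, integral_Iic_mul_stdGauss,
    integral_const_mul, integral_Iic_stdGauss_shift]
  ring

lemma integral_Ioi_mul_stdGauss_shift (a μ : ℝ) :
    ∫ t in Set.Ioi a, t * stdGauss (t - μ)
      = μ * (1 - stdCDF (a - μ)) + stdGauss (a - μ) := by
  have h : ∫ t in Set.Ioi a, t * stdGauss (t - μ)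
      = (∫ t in Set.Ioi a, (t - μ) * stdGauss (t - μ)) + ∫ t in Set.Ioi a, μ * stdGauss (t - μ) := by
    rw [← integral_add ((stdGauss_mul_integrable.comp_sub_right μ).integrableOn)
      (((stdGauss_integrable.comp_sub_right μ).const_mul μ).integrableOn)]
    exact setIntegral_congr_fun measurableSet_Ioi fun t _ => by ring
  rw [h, setIntegral_Ioi_comp_sub (fun s => s * stdGauss s) a μ, integral_Ioi_mul_stdGauss,
    integral_const_mul, integral_Ioi_stdGauss_shift]
  ring

lemma pHead_pos (x Δ : ℝ) : 0 < pHead x Δ := by unfold pHead; positivity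
lemma pTail_pos (x Δ : ℝ) : 0 < pTail x Δ := by unfold pTail; positivity
lemma pHead_add_pTail (x Δ : ℝ) : pHead x Δ + pTail x Δ = 1 := by
  unfold pHead pTail
  have h : (0:ℝ) < 1 + Real.exp (2 * x * Δ) := by positivity
  rw [← add_div, add_comm (Real.exp (2 * x * Δ)) 1]
  exact div_self h.ne'

/-- The centered update function: `pbsUpdate μ1 μ2 Δ - (μ1+μ2)/2 = Gfun x Δ`. -/
noncomputable def Gfun (x Δ : ℝ) : ℝ :=
  ((x * (pTail x Δ * stdCDF (Δ - x) - pHead x Δ * stdCDF (x + Δ))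
      - (pHead x Δ * stdGauss (x + Δ) + pTail x Δ * stdGauss (Δ - x)))
    / (pHead x Δ * stdCDF (x + Δ) + pTail x Δ * stdCDF (Δ - x))
  + (x * (pTail x Δ - pHead x Δ)
      - x * (pTail x Δ * stdCDF (Δ - x) - pHead x Δ * stdCDF (x + Δ))
      + (pHead x Δ * stdGauss (x + Δ) + pTail x Δ * stdGauss (Δ - x)))
    / (1 - (pHead x Δ * stdCDF (x + Δ) + pTail x Δ * stdCDF (Δ - x)))) / 2

lemma mix_integral_Iic (μ1 μ2 Δ : ℝ) :
    ∫ t in Set.Iic ((μ1 + μ2) / 2 + Δ), mixDensity μ1 μ2 Δ t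
      = pHead ((μ2 - μ1) / 2) Δ * stdCDF ((μ2 - μ1) / 2 + Δ)
        + pTail ((μ2 - μ1) / 2) Δ * stdCDF (Δ - (μ2 - μ1) / 2) := by
  unfold mixDensity
  rw [integral_add (((integrableOn_stdGauss_shift μ1 _).const_mul _))
    (((integrableOn_stdGauss_shift μ2 _).const_mul _)), integral_const_mul, integral_const_mul,
    integral_Iic_stdGauss_shift, integral_Iic_stdGauss_shift]
  congr 2 <;> ring

lemma mix_integral_Ioi (μ1 μ2 Δ : ℝ) :
    ∫ t in Set.Ioi ((μ1 + μ2) / 2 + Δ), mixDensity μ1 μ2 Δ t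
      = pHead ((μ2 - μ1) / 2) Δ * (1 - stdCDF ((μ2 - μ1) / 2 + Δ))
        + pTail ((μ2 - μ1) / 2) Δ * (1 - stdCDF (Δ - (μ2 - μ1) / 2)) := by
  unfold mixDensity
  rw [integral_add (((integrableOn_stdGauss_shift μ1 _).const_mul _))
    (((integrableOn_stdGauss_shift μ2 _).const_mul _)), integral_const_mul, integral_const_mul,
    integral_Ioi_stdGauss_shift, integral_Ioi_stdGauss_shift]
  congr 4 <;> ring

lemma mix_integral_Iic_mul (μ1 μ2 Δ : ℝ) :
    ∫ t in Set.Iic ((μ1 + μ2) / 2 + Δ), t * mixDensity μ1 μ2 Δ t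
      = pHead ((μ2 - μ1) / 2) Δ
          * (μ1 * stdCDF ((μ2 - μ1) / 2 + Δ) - stdGauss ((μ2 - μ1) / 2 + Δ))
        + pTail ((μ2 - μ1) / 2) Δ
          * (μ2 * stdCDF (Δ - (μ2 - μ1) / 2) - stdGauss (Δ - (μ2 - μ1) / 2)) := by
  unfold mixDensity
  have hcong : ∀ t : ℝ, t * (pHead ((μ2 - μ1) / 2) Δ * stdGauss (t - μ1)
        + pTail ((μ2 - μ1) / 2) Δ * stdGauss (t - μ2))
      = pHead ((μ2 - μ1) / 2) Δ * (t * stdGauss (t - μ1))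
        + pTail ((μ2 - μ1) / 2) Δ * (t * stdGauss (t - μ2)) := fun t => by ring
  rw [setIntegral_congr_fun measurableSet_Iic (fun t _ => hcong t),
    integral_add (((integrableOn_mul_stdGauss_shift μ1 _).const_mul _))
    (((integrableOn_mul_stdGauss_shift μ2 _).const_mul _)), integral_const_mul, integral_const_mul,
    integral_Iic_mul_stdGauss_shift, integral_Iic_mul_stdGauss_shift]
  have e1 : (μ1 + μ2) / 2 + Δ - μ1 = (μ2 - μ1) / 2 + Δ := by ring
  have e2 : (μ1 + μ2) / 2 + Δ - μ2 = Δ - (μ2 - μ1) / 2 := by ring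
  rw [e1, e2]

lemma mix_integral_Ioi_mul (μ1 μ2 Δ : ℝ) :
    ∫ t in Set.Ioi ((μ1 + μ2) / 2 + Δ), t * mixDensity μ1 μ2 Δ t
      = pHead ((μ2 - μ1) / 2) Δ
          * (μ1 * (1 - stdCDF ((μ2 - μ1) / 2 + Δ)) + stdGauss ((μ2 - μ1) / 2 + Δ))
        + pTail ((μ2 - μ1) / 2) Δ
          * (μ2 * (1 - stdCDF (Δ - (μ2 - μ1) / 2)) + stdGauss (Δ - (μ2 - μ1) / 2)) := by
  unfold mixDensity
  have hcong : ∀ t : ℝ, t * (pHead ((μ2 - μ1) / 2) Δ * stdGauss (t - μ1)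
        + pTail ((μ2 - μ1) / 2) Δ * stdGauss (t - μ2))
      = pHead ((μ2 - μ1) / 2) Δ * (t * stdGauss (t - μ1))
        + pTail ((μ2 - μ1) / 2) Δ * (t * stdGauss (t - μ2)) := fun t => by ring
  rw [setIntegral_congr_fun measurableSet_Ioi (fun t _ => hcong t),
    integral_add (((integrableOn_mul_stdGauss_shift μ1 _).const_mul _))
    (((integrableOn_mul_stdGauss_shift μ2 _).const_mul _)), integral_const_mul, integral_const_mul,
    integral_Ioi_mul_stdGauss_shift, integral_Ioi_mul_stdGauss_shift]
  have e1 : (μ1 + μ2) / 2 + Δ - μ1 = (μ2 - μ1) / 2 + Δ := by ring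
  have e2 : (μ1 + μ2) / 2 + Δ - μ2 = Δ - (μ2 - μ1) / 2 := by ring
  rw [e1, e2]

lemma pbsUpdate_eq_Gfun (μ1 μ2 Δ : ℝ) :
    pbsUpdate μ1 μ2 Δ - (μ1 + μ2) / 2 = Gfun ((μ2 - μ1) / 2) Δ := by
  set x := (μ2 - μ1) / 2 with hx
  set θ := (μ1 + μ2) / 2 with hθ
  set p1 := pHead x Δ
  set p2 := pTail x Δ
  set Φ1 := stdCDF (x + Δ)
  set Φ2 := stdCDF (Δ - x)
  set φ1 := stdGauss (x + Δ)
  set φ2 := stdGauss (Δ - x)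
  have hp : p1 + p2 = 1 := pHead_add_pTail x Δ
  have hΦ1 : 0 < Φ1 := stdCDF_pos _
  have hΦ2 : 0 < Φ2 := stdCDF_pos _
  have hΦ1' : Φ1 < 1 := stdCDF_lt_one _
  have hΦ2' : Φ2 < 1 := stdCDF_lt_one _
  have hp1 : 0 < p1 := pHead_pos x Δ
  have hp2 : 0 < p2 := pTail_pos x Δ
  have hA : 0 < p1 * Φ1 + p2 * Φ2 := by positivity
  have hC : 0 < 1 - (p1 * Φ1 + p2 * Φ2) := by nlinarith
  have hμ1 : μ1 = θ - x := by rw [hx, hθ]; ring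
  have hμ2 : μ2 = θ + x := by rw [hx, hθ]; ring
  unfold pbsUpdate mLeft mRight
  rw [mix_integral_Iic, mix_integral_Ioi, mix_integral_Iic_mul, mix_integral_Ioi_mul]
  unfold Gfun
  show ((p1 * (μ1 * Φ1 - φ1) + p2 * (μ2 * Φ2 - φ2)) / (p1 * Φ1 + p2 * Φ2)
      + (p1 * (μ1 * (1 - Φ1) + φ1) + p2 * (μ2 * (1 - Φ2) + φ2))
        / (p1 * (1 - Φ1) + p2 * (1 - Φ2))) / 2 - θ
    = ((x * (p2 * Φ2 - p1 * Φ1) - (p1 * φ1 + p2 * φ2)) / (p1 * Φ1 + p2 * Φ2)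
      + (x * (p2 - p1) - x * (p2 * Φ2 - p1 * Φ1) + (p1 * φ1 + p2 * φ2))
        / (1 - (p1 * Φ1 + p2 * Φ2))) / 2
  have hCeq : p1 * (1 - Φ1) + p2 * (1 - Φ2) = 1 - (p1 * Φ1 + p2 * Φ2) := by
    nlinarith [hp]
  have hp2' : p2 = 1 - p1 := by linarith
  rw [hCeq, hμ1, hμ2, hp2']
  rw [hp2'] at hA hC
  field_simp [hA.ne', hC.ne']
  ring

set_option maxHeartbeats 1600000 in
lemma hasDerivAt_Gfun (x : ℝ) :
    HasDerivAt (Gfun x)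
      (4 * (stdGauss x - x * (1 - stdCDF x)) * (x * stdCDF x + stdGauss x)) 0 := by
  have he : HasDerivAt (fun Δ : ℝ => Real.exp (2 * x * Δ)) (2 * x) 0 := by
    have h := ((hasDerivAt_id (0:ℝ)).const_mul (2 * x)).exp
    refine (h).congr_deriv (Eq.symm ?_)
    simp
  have hden : (1 : ℝ) + Real.exp (2 * x * 0) ≠ 0 := by positivity
  have hp1 : HasDerivAt (fun Δ : ℝ => pHead x Δ) (x / 2) 0 := by
    have h := he.div (he.const_add 1) hden
    refine (h).congr_deriv (Eq.symm ?_)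
    simp
    ring
  have hp2 : HasDerivAt (fun Δ : ℝ => pTail x Δ) (-(x / 2)) 0 := by
    have h := (hasDerivAt_const (0:ℝ) (1:ℝ)).div (he.const_add 1) hden
    refine (h).congr_deriv (Eq.symm ?_)
    simp
    ring
  have hΦ1 : HasDerivAt (fun Δ : ℝ => stdCDF (x + Δ)) (stdGauss x) 0 := by
    have h := (hasDerivAt_stdCDF (x + 0)).comp 0 ((hasDerivAt_id (0:ℝ)).const_add x)
    refine (h).congr_deriv (Eq.symm ?_)
    simp
  have hΦ2 : HasDerivAt (fun Δ : ℝ => stdCDF (Δ - x)) (stdGauss x) 0 := by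
    have h := (hasDerivAt_stdCDF (0 - x)).comp 0 ((hasDerivAt_id (0:ℝ)).sub_const x)
    refine (h).congr_deriv (Eq.symm ?_)
    simp [stdGauss_neg]
  have hφ1 : HasDerivAt (fun Δ : ℝ => stdGauss (x + Δ)) (-x * stdGauss x) 0 := by
    have h := (hasDerivAt_stdGauss (x + 0)).comp 0 ((hasDerivAt_id (0:ℝ)).const_add x)
    refine (h).congr_deriv (Eq.symm ?_)
    simp
  have hφ2 : HasDerivAt (fun Δ : ℝ => stdGauss (Δ - x)) (x * stdGauss x) 0 := by
    have h := (hasDerivAt_stdGauss (0 - x)).comp 0 ((hasDerivAt_id (0:ℝ)).sub_const x)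
    refine (h).congr_deriv (Eq.symm ?_)
    rw [show (0:ℝ) - x = -x by ring, stdGauss_neg]
    simp
  have hD1 : HasDerivAt (fun Δ : ℝ => pHead x Δ * stdCDF (x + Δ) + pTail x Δ * stdCDF (Δ - x))
      (x / 2 * stdCDF (x + 0) + pHead x 0 * stdGauss x
        + (-(x / 2) * stdCDF (0 - x) + pTail x 0 * stdGauss x)) 0 :=
    (hp1.mul hΦ1).add (hp2.mul hΦ2)
  have hW : HasDerivAt (fun Δ : ℝ => pHead x Δ * stdGauss (x + Δ) + pTail x Δ * stdGauss (Δ - x))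
      (x / 2 * stdGauss (x + 0) + pHead x 0 * (-x * stdGauss x)
        + (-(x / 2) * stdGauss (0 - x) + pTail x 0 * (x * stdGauss x))) 0 :=
    (hp1.mul hφ1).add (hp2.mul hφ2)
  have hU : HasDerivAt (fun Δ : ℝ => x * (pTail x Δ * stdCDF (Δ - x) - pHead x Δ * stdCDF (x + Δ)))
      (x * ((-(x / 2) * stdCDF (0 - x) + pTail x 0 * stdGauss x)
        - (x / 2 * stdCDF (x + 0) + pHead x 0 * stdGauss x))) 0 :=
    ((hp2.mul hΦ2).sub (hp1.mul hΦ1)).const_mul x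
  have hpd : HasDerivAt (fun Δ : ℝ => x * (pTail x Δ - pHead x Δ))
      (x * (-(x / 2) - x / 2)) 0 := (hp2.sub hp1).const_mul x
  have hp0 : pHead x 0 = 1/2 := by simp [pHead]; norm_num
  have hq0 : pTail x 0 = 1/2 := by simp [pTail]; norm_num
  have hΦn : stdCDF (0 - x) = 1 - stdCDF x := by
    rw [show (0:ℝ) - x = -x by ring, stdCDF_neg]
  have hD10 : pHead x 0 * stdCDF (x + 0) + pTail x 0 * stdCDF (0 - x) = 1/2 := by
    rw [hp0, hq0, add_zero, hΦn]; ring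
  have hD1ne : pHead x 0 * stdCDF (x + 0) + pTail x 0 * stdCDF (0 - x) ≠ 0 := by
    rw [hD10]; norm_num
  have hD2ne : 1 - (pHead x 0 * stdCDF (x + 0) + pTail x 0 * stdCDF (0 - x)) ≠ 0 := by
    rw [hD10]; norm_num
  have hN1 := hU.sub hW
  have hN2 := (hpd.sub hU).add hW
  have hbig := ((hN1.div hD1 hD1ne).add
    (hN2.div ((hasDerivAt_const (0:ℝ) (1:ℝ)).sub hD1) hD2ne)).div_const 2
  refine (hbig).congr_deriv (Eq.symm ?_)
  simp only [Pi.sub_apply, Pi.add_apply]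
  have hW0 : pHead x 0 * stdGauss (x + 0) + pTail x 0 * stdGauss (0 - x)
      = stdGauss x := by
    rw [hp0, hq0, add_zero, show (0:ℝ) - x = -x by ring, stdGauss_neg]; ring
  have hU0 : pTail x 0 * stdCDF (0 - x) - pHead x 0 * stdCDF (x + 0)
      = 1/2 - stdCDF x := by
    rw [hp0, hq0, add_zero, hΦn]; ring
  rw [hp0, hq0, hΦn, add_zero, show (0:ℝ) - x = -x by ring, stdGauss_neg]
  field_simp
  ring

lemma stdGauss_le_zero_val (t : ℝ) : stdGauss t ≤ stdGauss 0 := by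
  unfold stdGauss
  have : Real.exp (-t ^ 2 / 2) ≤ Real.exp (-0 ^ 2 / 2) := by
    apply Real.exp_le_exp.mpr; nlinarith [sq_nonneg t]
  have h0 : (0:ℝ) < (Real.sqrt (2 * Real.pi))⁻¹ := by
    have := sqrt2pi_pos; positivity
  nlinarith

lemma stdGauss_zero_sq : stdGauss 0 ^ 2 = (2 * Real.pi)⁻¹ := by
  unfold stdGauss
  rw [show (-(0:ℝ) ^ 2 / 2) = 0 by norm_num, Real.exp_zero, mul_one]
  rw [inv_pow, Real.sq_sqrt (by positivity)]

lemma stdCDF_sub_eq (a b : ℝ) : stdCDF b - stdCDF a = ∫ s in a..b, stdGauss s := by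
  exact intervalIntegral.integral_Iic_sub_Iic
    stdGauss_integrable.integrableOn stdGauss_integrable.integrableOn

lemma stdCDF_ge_half {x : ℝ} (hx : 0 ≤ x) : 1/2 ≤ stdCDF x := by
  have h := stdCDF_sub_eq 0 x
  have hnn : 0 ≤ ∫ s in (0:ℝ)..x, stdGauss s :=
    intervalIntegral.integral_nonneg hx (fun t _ => (stdGauss_pos t).le)
  rw [stdCDF_zero] at h; linarith

lemma stdCDF_le_half_add {x : ℝ} (hx : 0 ≤ x) : stdCDF x ≤ 1/2 + x * stdGauss 0 := by
  have h := stdCDF_sub_eq 0 x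
  have hb : ∫ s in (0:ℝ)..x, stdGauss s ≤ ∫ _ in (0:ℝ)..x, stdGauss 0 := by
    apply intervalIntegral.integral_mono_on hx
      stdGauss_integrable.intervalIntegrable (intervalIntegrable_const)
    exact fun t _ => stdGauss_le_zero_val t
  rw [intervalIntegral.integral_const, smul_eq_mul] at hb
  rw [stdCDF_zero] at h
  nlinarith

lemma mills_low (x : ℝ) : x * (1 - stdCDF x) ≤ stdGauss x := by
  have key : ∫ t in Set.Ioi x, (t - x) * stdGauss t
      = stdGauss x - x * (1 - stdCDF x) := by
    have : ∀ t : ℝ, (t - x) * stdGauss t = t * stdGauss t - x * stdGauss t := fun t => by ring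
    rw [setIntegral_congr_fun measurableSet_Ioi (fun t _ => this t),
      integral_sub stdGauss_mul_integrable.integrableOn
        (stdGauss_integrable.integrableOn.const_mul x),
      integral_Ioi_mul_stdGauss, integral_const_mul, integral_Ioi_stdGauss]
  have hnn : 0 ≤ ∫ t in Set.Ioi x, (t - x) * stdGauss t :=
    setIntegral_nonneg measurableSet_Ioi
      (fun t ht => mul_nonneg (by linarith [ht.out]) (stdGauss_pos t).le)
  linarith

lemma tendsto_mul_stdGauss_atTop : Tendsto (fun t : ℝ => t * stdGauss t) atTop (nhds 0) := by
  have hub : ∀ᶠ t : ℝ in atTop, t * stdGauss t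
      ≤ (Real.sqrt (2 * Real.pi))⁻¹ * Real.exp (1/2) * Real.exp (-(t-1) ^ 2 / 2) := by
    filter_upwards [eventually_ge_atTop (0:ℝ)] with t ht
    have h1 : t ≤ Real.exp t := (Real.add_one_le_exp t).trans' (by linarith)
    have h2 : t * Real.exp (-t ^ 2 / 2) ≤ Real.exp t * Real.exp (-t ^ 2 / 2) :=
      mul_le_mul_of_nonneg_right h1 (Real.exp_pos _).le
    have h3 : Real.exp t * Real.exp (-t ^ 2 / 2) = Real.exp (1/2) * Real.exp (-(t-1) ^ 2 / 2) := by
      rw [← Real.exp_add, ← Real.exp_add]; congr 1; ring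
    unfold stdGauss
    have h0 : (0:ℝ) < (Real.sqrt (2 * Real.pi))⁻¹ := by
      have := sqrt2pi_pos; positivity
    calc t * ((Real.sqrt (2 * Real.pi))⁻¹ * Real.exp (-t ^ 2 / 2))
        = (Real.sqrt (2 * Real.pi))⁻¹ * (t * Real.exp (-t ^ 2 / 2)) := by ring
      _ ≤ (Real.sqrt (2 * Real.pi))⁻¹ * (Real.exp t * Real.exp (-t ^ 2 / 2)) := by
          exact mul_le_mul_of_nonneg_left h2 h0.le
      _ = (Real.sqrt (2 * Real.pi))⁻¹ * Real.exp (1/2) * Real.exp (-(t-1) ^ 2 / 2) := by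
          rw [h3]; ring
  have hlb : ∀ᶠ t : ℝ in atTop, 0 ≤ t * stdGauss t := by
    filter_upwards [eventually_ge_atTop (0:ℝ)] with t ht
    exact mul_nonneg ht (stdGauss_pos t).le
  have htends : Tendsto (fun t : ℝ => (Real.sqrt (2 * Real.pi))⁻¹ * Real.exp (1/2)
      * Real.exp (-(t-1) ^ 2 / 2)) atTop (nhds 0) := by
    have hg : Tendsto (fun t : ℝ => stdGauss (t - 1)) atTop (nhds 0) :=
      tendsto_stdGauss_atTop.comp (tendsto_atTop_add_const_right atTop (-1) tendsto_id)
    have := hg.const_mul (Real.exp (1/2))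
    rw [mul_zero] at this
    refine this.congr fun t => ?_
    unfold stdGauss
    ring
  exact tendsto_of_tendsto_of_tendsto_of_le_of_le'
    tendsto_const_nhds htends hlb hub

lemma hasDerivAt_neg_mul_stdGauss (t : ℝ) :
    HasDerivAt (fun s : ℝ => -s * stdGauss s) ((t ^ 2 - 1) * stdGauss t) t := by
  have h := ((hasDerivAt_id t).neg).mul (hasDerivAt_stdGauss t)
  refine (h).congr_deriv (Eq.symm ?_)
  simp only [id_eq, Pi.neg_apply]
  ring

lemma integrableOn_sq_mul_stdGauss {x : ℝ} (hx : 0 ≤ x) :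
    IntegrableOn (fun t : ℝ => t ^ 2 * stdGauss t) (Set.Ioi x) := by
  have h0 : IntegrableOn (fun t : ℝ => t ^ (2:ℝ) * Real.exp (-(1/2:ℝ) * t ^ 2)) (Set.Ioi 0) :=
    integrableOn_rpow_mul_exp_neg_mul_sq (by norm_num) (by norm_num)
  have h0' : IntegrableOn (fun t : ℝ => (Real.sqrt (2 * Real.pi))⁻¹
      * (t ^ (2:ℝ) * Real.exp (-(1/2:ℝ) * t ^ 2))) (Set.Ioi 0) :=
    h0.const_mul ((Real.sqrt (2 * Real.pi))⁻¹)
  have h1 : IntegrableOn (fun t : ℝ => t ^ 2 * stdGauss t) (Set.Ioi 0) := by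
    refine h0'.congr_fun (fun t ht => ?_) measurableSet_Ioi
    beta_reduce
    rw [show t ^ (2:ℝ) = t ^ (2:ℕ) from Real.rpow_natCast t 2, ← exp_eq_stdGauss]
    push_cast
    ring
  exact h1.mono_set (Set.Ioi_subset_Ioi hx)

lemma integral_Ioi_sq_sub_one {x : ℝ} (hx : 0 ≤ x) :
    ∫ t in Set.Ioi x, (t ^ 2 - 1) * stdGauss t = x * stdGauss x := by
  have hint : IntegrableOn (fun t : ℝ => (t ^ 2 - 1) * stdGauss t) (Set.Ioi x) := by
    have h2 : IntegrableOn (fun t : ℝ => t ^ 2 * stdGauss t - stdGauss t) (Set.Ioi x) :=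
      (integrableOn_sq_mul_stdGauss hx).sub (stdGauss_integrable.integrableOn (s := Set.Ioi x))
    exact h2.congr_fun (fun t _ => by ring) measurableSet_Ioi
  have := integral_Ioi_of_hasDerivAt_of_tendsto' (a := x) (m := 0)
    (f := fun t => -t * stdGauss t) (f' := fun t => (t ^ 2 - 1) * stdGauss t)
    (fun t _ => hasDerivAt_neg_mul_stdGauss t) hint
    (by simpa using tendsto_mul_stdGauss_atTop.neg)
  rw [this]; ring

lemma mills_up {x : ℝ} (hx : 0 ≤ x) :
    stdGauss x ^ 2 ≤ (1 - stdCDF x) ^ 2 + x * stdGauss x * (1 - stdCDF x) := by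
  set u := 1 - stdCDF x with hu
  set v := stdGauss x with hv
  have hupos : 0 < u := by have := stdCDF_lt_one x; rw [hu]; linarith
  have key : ∫ t in Set.Ioi x, (u * t - v) ^ 2 * stdGauss t
      = u ^ 2 * (x * v) - u ^ 2 * u + u ^ 2 * u - 2 * u * v * v + (u ^ 2 + v ^ 2) * u := by
    have hexp : ∀ t : ℝ, (u * t - v) ^ 2 * stdGauss t
        = u ^ 2 * ((t ^ 2 - 1) * stdGauss t) - (2 * u * v) * (t * stdGauss t)
          + (u ^ 2 + v ^ 2) * stdGauss t := fun t => by ring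
    have hint1 : IntegrableOn (fun t : ℝ => (t ^ 2 - 1) * stdGauss t) (Set.Ioi x) := by
      have h2 : IntegrableOn (fun t : ℝ => t ^ 2 * stdGauss t - stdGauss t) (Set.Ioi x) :=
        (integrableOn_sq_mul_stdGauss hx).sub (stdGauss_integrable.integrableOn (s := Set.Ioi x))
      exact h2.congr_fun (fun t _ => by ring) measurableSet_Ioi
    have hf1 : IntegrableOn (fun t : ℝ => u ^ 2 * ((t ^ 2 - 1) * stdGauss t)) (Set.Ioi x) :=
      hint1.const_mul _
    have hf2 : IntegrableOn (fun t : ℝ => (2 * u * v) * (t * stdGauss t)) (Set.Ioi x) :=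
      (stdGauss_mul_integrable.integrableOn).const_mul _
    have hf3 : IntegrableOn (fun t : ℝ => (u ^ 2 + v ^ 2) * stdGauss t) (Set.Ioi x) :=
      (stdGauss_integrable.integrableOn).const_mul _
    have hf12 : IntegrableOn
        (fun t : ℝ => u ^ 2 * ((t ^ 2 - 1) * stdGauss t) - (2 * u * v) * (t * stdGauss t))
        (Set.Ioi x) :=
      IntegrableOn.congr_fun (hf1.sub hf2) (fun t _ => rfl) measurableSet_Ioi
    rw [setIntegral_congr_fun measurableSet_Ioi (fun t _ => hexp t)]
    rw [show (∫ t in Set.Ioi x, (u ^ 2 * ((t ^ 2 - 1) * stdGauss t)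
          - (2 * u * v) * (t * stdGauss t) + (u ^ 2 + v ^ 2) * stdGauss t))
        = (∫ t in Set.Ioi x, (u ^ 2 * ((t ^ 2 - 1) * stdGauss t)
          - (2 * u * v) * (t * stdGauss t))) + ∫ t in Set.Ioi x, (u ^ 2 + v ^ 2) * stdGauss t
        from integral_add hf12 hf3,
      integral_sub hf1 hf2,
      integral_const_mul, integral_const_mul, integral_const_mul,
      integral_Ioi_sq_sub_one hx, integral_Ioi_mul_stdGauss, integral_Ioi_stdGauss]
    rw [← hu, ← hv]
    ring
  have hnn : 0 ≤ ∫ t in Set.Ioi x, (u * t - v) ^ 2 * stdGauss t :=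
    setIntegral_nonneg measurableSet_Ioi
      (fun t _ => mul_nonneg (sq_nonneg _) (stdGauss_pos t).le)
  rw [key] at hnn
  nlinarith [hupos, hnn]

lemma stdGauss_zero_le_half : stdGauss 0 ≤ 1/2 := by
  have h2 : (2:ℝ) ≤ Real.sqrt (2 * Real.pi) := by
    rw [show ((2:ℝ) ≤ Real.sqrt (2 * Real.pi)) ↔ (2:ℝ)^2 ≤ 2 * Real.pi from
      Real.le_sqrt' (by norm_num)]
    nlinarith [Real.pi_gt_three]
  have : (Real.sqrt (2 * Real.pi))⁻¹ ≤ 1/2 := by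
    rw [show (1:ℝ)/2 = 2⁻¹ by norm_num]
    exact inv_anti₀ (by norm_num) h2
  calc stdGauss 0 = (Real.sqrt (2 * Real.pi))⁻¹ * Real.exp (-0^2/2) := rfl
    _ = (Real.sqrt (2 * Real.pi))⁻¹ := by norm_num
    _ ≤ 1/2 := this

lemma star_ineq {x : ℝ} (hx : 0 ≤ x) :
    stdGauss x * (2 * stdCDF x - 1) ≤ 2 * x * stdCDF x * (1 - stdCDF x) := by
  set P := stdCDF x with hP
  set f := stdGauss x with hf
  have hfpos : 0 < f := stdGauss_pos x
  have hP1 : 1/2 ≤ P := stdCDF_ge_half hx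
  have hP2 : P < 1 := stdCDF_lt_one x
  have hu : 0 < 1 - P := by linarith
  have hPle : P ≤ (1 + x)/2 := by
    have h1 := stdCDF_le_half_add hx
    have h2 := stdGauss_zero_le_half
    have h3 : x * stdGauss 0 ≤ x * (1/2) := mul_le_mul_of_nonneg_left h2 hx
    rw [← hP] at h1
    linarith
  set s := Real.sqrt (x^2 + 4) with hs
  have hs2 : s^2 = x^2 + 4 := Real.sq_sqrt (by positivity)
  have hs0 : 0 ≤ s := Real.sqrt_nonneg _
  have hsx : x < s := by nlinarith
  have hsle : s ≤ x + 2 := by nlinarith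
  have hmu := mills_up hx
  rw [← hP, ← hf] at hmu
  -- from mills_up : 2 f ≤ (1-P)(x+s)
  have hkey : ((1-P)*(x+s) - 2*f) * ((1-P)*(s-x) + 2*f)
      = 4*((1-P)^2 + x*f*(1-P) - f^2) := by
    linear_combination (1-P)^2 * hs2
  have hfac : 0 < (1-P)*(s-x) + 2*f := by nlinarith
  have hprod : 0 ≤ ((1-P)*(x+s) - 2*f) * ((1-P)*(s-x) + 2*f) := by
    rw [hkey]; nlinarith
  have hfle : 2*f ≤ (1-P)*(x+s) := by nlinarith
  -- 2 P (s - x) ≤ s + x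
  have hΦs : 2*P*(s-x) ≤ s + x := by nlinarith
  -- combine
  nlinarith [mul_le_mul_of_nonneg_right hfle (by linarith : (0:ℝ) ≤ 2*P - 1),
    mul_le_mul_of_nonneg_left hΦs (by linarith : (0:ℝ) ≤ 1 - P)]

noncomputable def qfun (t : ℝ) : ℝ :=
  (stdGauss t - t * (1 - stdCDF t)) * (t * stdCDF t + stdGauss t)

lemma hasDerivAt_qfun (t : ℝ) :
    HasDerivAt qfun
      (stdGauss t * (2 * stdCDF t - 1) - 2 * t * stdCDF t * (1 - stdCDF t)) t := by
  have ha : HasDerivAt (fun u : ℝ => stdGauss u - u * (1 - stdCDF u)) (-(1 - stdCDF t)) t := by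
    have h := (hasDerivAt_stdGauss t).sub
      ((hasDerivAt_id t).mul ((hasDerivAt_const t (1:ℝ)).sub (hasDerivAt_stdCDF t)))
    refine (h).congr_deriv (Eq.symm ?_)
    simp only [id_eq, Pi.sub_apply]
    ring
  have hb : HasDerivAt (fun u : ℝ => u * stdCDF u + stdGauss u) (stdCDF t) t := by
    have h := ((hasDerivAt_id t).mul (hasDerivAt_stdCDF t)).add (hasDerivAt_stdGauss t)
    refine (h).congr_deriv (Eq.symm ?_)
    simp only [id_eq]
    ring
  have h := ha.mul hb
  refine (h).congr_deriv (Eq.symm ?_)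
  ring

lemma qfun_antitone : AntitoneOn qfun (Set.Ici 0) := by
  have hdiff : ∀ t : ℝ, DifferentiableAt ℝ qfun t :=
    fun t => (hasDerivAt_qfun t).differentiableAt
  apply antitoneOn_of_deriv_nonpos (convex_Ici 0)
    (Continuous.continuousOn (by
      have : Differentiable ℝ qfun := fun t => hdiff t
      exact this.continuous))
    (fun t _ => (hdiff t).differentiableWithinAt)
  intro t ht
  rw [interior_Ici] at ht
  rw [(hasDerivAt_qfun t).deriv]
  have := star_ineq (le_of_lt ht.out)
  linarith

lemma qfun_le {x : ℝ} (hx : 0 ≤ x) : qfun x ≤ (2 * Real.pi)⁻¹ := by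
  have h := qfun_antitone (Set.self_mem_Ici) (Set.mem_Ici.mpr hx) hx
  have h0 : qfun 0 = (2 * Real.pi)⁻¹ := by
    unfold qfun
    rw [show (0:ℝ) * (1 - stdCDF 0) = 0 by ring, show (0:ℝ) * stdCDF 0 = 0 by ring]
    rw [sub_zero, zero_add, ← sq, stdGauss_zero_sq]
  linarith

lemma L_bounds {x : ℝ} (hx : 0 ≤ x) :
    0 ≤ 4 * (stdGauss x - x * (1 - stdCDF x)) * (x * stdCDF x + stdGauss x) ∧
    4 * (stdGauss x - x * (1 - stdCDF x)) * (x * stdCDF x + stdGauss x) ≤ 2 / Real.pi := by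
  have ha : 0 ≤ stdGauss x - x * (1 - stdCDF x) := by linarith [mills_low x]
  have hb : 0 < x * stdCDF x + stdGauss x := by
    have := stdGauss_pos x
    have := stdCDF_pos x
    nlinarith
  constructor
  · positivity
  · have hq := qfun_le hx
    have hqe : qfun x = (stdGauss x - x * (1 - stdCDF x)) * (x * stdCDF x + stdGauss x) := rfl
    have hpi : 0 < Real.pi := Real.pi_pos
    have : 4 * (stdGauss x - x * (1 - stdCDF x)) * (x * stdCDF x + stdGauss x)
        ≤ 4 * (2 * Real.pi)⁻¹ := by
      rw [hqe] at hq
      nlinarith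
    calc 4 * (stdGauss x - x * (1 - stdCDF x)) * (x * stdCDF x + stdGauss x)
        ≤ 4 * (2 * Real.pi)⁻¹ := this
      _ = 2 / Real.pi := by field_simp; ring

lemma pHead_zero (x : ℝ) : pHead x 0 = 1/2 := by simp [pHead]; norm_num
lemma pTail_zero (x : ℝ) : pTail x 0 = 1/2 := by simp [pTail]; norm_num

lemma Gfun_zero (x : ℝ) : Gfun x 0 = 0 := by
  unfold Gfun
  rw [pHead_zero, pTail_zero, add_zero, zero_sub, stdCDF_neg, stdGauss_neg]
  have hd : (1:ℝ)/2 * stdCDF x + 1/2 * (1 - stdCDF x) = 1/2 := by ring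
  rw [hd]
  ring

/-- **Proposition 1 (local contraction form).** For every `c` with `2/π < c < 1`
there is `ε > 0` such that for all `Δ` with `0 < |Δ| < ε`, the
progressively-balanced-sampling update satisfies `|θ̂(Δ) − θ*| ≤ c·|Δ|`. -/
theorem pbsUpdate_local_contraction (μ1 μ2 : ℝ) (hμ : μ1 < μ2) :
    ∀ c : ℝ, 2 / Real.pi < c → c < 1 →
      ∃ ε > (0 : ℝ), ∀ Δ : ℝ, 0 < |Δ| → |Δ| < ε →
        |pbsUpdate μ1 μ2 Δ - (μ1 + μ2) / 2| ≤ c * |Δ| := by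
  intro c hc1 hc2
  set x := (μ2 - μ1) / 2 with hx
  have hx0 : 0 ≤ x := by rw [hx]; linarith
  set L := 4 * (stdGauss x - x * (1 - stdCDF x)) * (x * stdCDF x + stdGauss x) with hL
  obtain ⟨hL0, hL1⟩ := L_bounds hx0
  have hd := hasDerivAt_Gfun x
  rw [hasDerivAt_iff_isLittleO] at hd
  have hδ : 0 < c - 2 / Real.pi := by linarith
  have hev := hd.def hδ
  rw [Metric.eventually_nhds_iff] at hev
  obtain ⟨ε, hε, hball⟩ := hev
  refine ⟨ε, hε, fun Δ hΔ0 hΔε => ?_⟩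
  have hmem : dist Δ (0:ℝ) < ε := by simpa [Real.dist_eq] using hΔε
  have h := hball hmem
  simp only [Gfun_zero, sub_zero, smul_eq_mul, Real.norm_eq_abs] at h
  rw [pbsUpdate_eq_Gfun, ← hx]
  have habs : |Δ * L| = |Δ| * L := by
    rw [abs_mul, abs_of_nonneg hL0]
  calc |Gfun x Δ| = |(Gfun x Δ - Δ * L) + Δ * L| := by ring_nf
    _ ≤ |Gfun x Δ - Δ * L| + |Δ * L| := abs_add_le _ _
    _ ≤ (c - 2 / Real.pi) * |Δ| + |Δ| * L := by
        refine add_le_add ?_ (le_of_eq habs)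
        exact h
    _ ≤ (c - 2 / Real.pi) * |Δ| + |Δ| * (2 / Real.pi) := by
        have := abs_nonneg Δ
        nlinarith
    _ = c * |Δ| := by ring
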